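/- For every positive integer n and every integer k with 0 ≤ k ≤ n−1, S_{n,k} = S_{n,n−k−1}. -/

import Mathlib

open Finset

/-- Number of ascents of a permutation of `[n]` (positions `i` with `a_i < a_{i+1}`). -/
def ascents {n : ℕ} (A : Equiv.Perm (Fin n)) : ℕ :=
  (univ.filter fun i : Fin n => ∃ h : i.val + 1 < n, A i < A ⟨i.val + 1, h⟩).card

/-- Number of inversions of a permutation. -/
def invNum {n : ℕ} (A : Equiv.Perm (Fin n)) : ℕ :=
  (univ.filter fun p : Fin n × Fin n => p.1 < p.2 ∧ A p.2 < A p.1).card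

/-- A permutation is parity-alternate if consecutive entries have different parity. -/
def IsPAP {n : ℕ} (A : Equiv.Perm (Fin n)) : Prop :=
  ∀ i : Fin n, ∀ h : i.val + 1 < n, (A i).val % 2 ≠ (A ⟨i.val + 1, h⟩).val % 2

instance {n : ℕ} (A : Equiv.Perm (Fin n)) : Decidable (IsPAP A) := by
  unfold IsPAP; infer_instance

/-- `P_{n,k}`: number of even parity-alternate permutations of `[n]` with `k` ascents. -/
def papEven (n k : ℕ) : ℕ :=
  (univ.filter fun A : Equiv.Perm (Fin n) => IsPAP A ∧ ascents A = k ∧ Even (invNum A)).card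

/-- `Q_{n,k}`: number of odd parity-alternate permutations of `[n]` with `k` ascents. -/
def papOdd (n k : ℕ) : ℕ :=
  (univ.filter fun A : Equiv.Perm (Fin n) => IsPAP A ∧ ascents A = k ∧ Odd (invNum A)).card

/-- `S_{n,k}`: number of parity-alternate permutations of `[n]` with `k` ascents. -/
def papTotal (n k : ℕ) : ℕ :=
  (univ.filter fun A : Equiv.Perm (Fin n) => IsPAP A ∧ ascents A = k).card

/-- `R_{n,k} = P_{n,k} - Q_{n,k}`. -/
def papSigned (n k : ℕ) : ℤ := (papEven n k : ℤ) - papOdd n k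

/-- `B_{n,k}`: number of even permutations of `[n]` with `k` ascents. -/
def eulerEven (n k : ℕ) : ℕ :=
  (univ.filter fun A : Equiv.Perm (Fin n) => ascents A = k ∧ Even (invNum A)).card

/-- `C_{n,k}`: number of odd permutations of `[n]` with `k` ascents. -/
def eulerOdd (n k : ℕ) : ℕ :=
  (univ.filter fun A : Equiv.Perm (Fin n) => ascents A = k ∧ Odd (invNum A)).card

/-- `D_{n,k} = B_{n,k} - C_{n,k}`: the signed Eulerian number. -/
def eulerSigned (n k : ℕ) : ℤ := (eulerEven n k : ℤ) - eulerOdd n k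


/-- Number of descents of a permutation. -/
def descents {n : ℕ} (A : Equiv.Perm (Fin n)) : ℕ :=
  (univ.filter fun i : Fin n => ∃ h : i.val + 1 < n, A ⟨i.val + 1, h⟩ < A i).card

lemma ascents_add_descents {n : ℕ} (A : Equiv.Perm (Fin n)) :
    ascents A + descents A = n - 1 := by
  classical
  unfold ascents descents
  rw [← card_union_of_disjoint]
  · have h1 : ((univ.filter fun i : Fin n => ∃ h : i.val + 1 < n, A i < A ⟨i.val+1,h⟩) ∪
        (univ.filter fun i : Fin n => ∃ h : i.val + 1 < n, A ⟨i.val+1,h⟩ < A i))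
        = univ.filter fun i : Fin n => i.val + 1 < n := by
      ext i
      simp only [mem_union, mem_filter, mem_univ, true_and]
      constructor
      · rintro (⟨h, _⟩ | ⟨h, _⟩) <;> exact h
      · intro h
        have hne : A i ≠ A ⟨i.val+1, h⟩ := by
          intro he
          have h2 : i.val = i.val + 1 := congrArg Fin.val (A.injective he)
          omega
        rcases lt_or_gt_of_ne hne with hlt | hgt
        · exact Or.inl ⟨h, hlt⟩
        · exact Or.inr ⟨h, hgt⟩
    rw [h1]
    have := Fintype.card_fin (n - 1)
    rw [← Finset.card_univ] at this
    rw [← this]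
    refine Finset.card_bij'
      (i := fun (a : Fin n) (ha : a ∈ univ.filter fun i : Fin n => i.val + 1 < n) =>
        (⟨a.val, by simp only [mem_filter, mem_univ, true_and] at ha; omega⟩ : Fin (n-1)))
      (j := fun (b : Fin (n-1)) (_ : b ∈ (univ : Finset (Fin (n-1)))) =>
        (⟨b.val, by omega⟩ : Fin n)) ?_ ?_ ?_ ?_
    · intro a _; exact mem_univ _
    · intro a _
      simp only [mem_filter, mem_univ, true_and]
      omega
    · intro a ha
      rfl
    · intro a _
      rfl
  · rw [Finset.disjoint_left]
    intro i hi hi'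
    simp only [mem_filter, mem_univ, true_and] at hi hi'
    obtain ⟨h, hlt⟩ := hi
    obtain ⟨h', hgt⟩ := hi'
    exact absurd hlt (not_lt.2 hgt.le)

lemma isPAP_rev {n : ℕ} (A : Equiv.Perm (Fin n)) (hA : IsPAP A) :
    IsPAP (Fin.revPerm.trans A) := by
  intro i h
  simp only [Equiv.trans_apply, Fin.revPerm_apply]
  have h2 : (n - 2 - i.val) + 1 < n := by omega
  have e1 : (⟨i.val+1,h⟩ : Fin n).rev = ⟨n - 2 - i.val, by omega⟩ := by
    ext; simp [Fin.val_rev]; omega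
  have e2 : i.rev = ⟨(n-2-i.val)+1, h2⟩ := by
    ext; simp [Fin.val_rev]; omega
  rw [e1, e2]
  exact (hA ⟨n-2-i.val, by omega⟩ h2).symm

lemma ascents_rev {n : ℕ} (A : Equiv.Perm (Fin n)) :
    ascents (Fin.revPerm.trans A) = descents A := by
  classical
  unfold ascents descents
  apply Finset.card_nbij' (i := fun i : Fin n => (⟨n - 2 - i.val, by omega⟩ : Fin n))
    (j := fun i : Fin n => (⟨n - 2 - i.val, by omega⟩ : Fin n))
  · intro a ha
    simp only [mem_coe, mem_filter, mem_univ, true_and, Equiv.trans_apply, Fin.revPerm_apply] at ha ⊢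
    obtain ⟨h, hlt⟩ := ha
    refine ⟨by omega, ?_⟩
    have e1 : (⟨a.val+1,h⟩ : Fin n).rev = (⟨n - 2 - a.val, by omega⟩ : Fin n) := by
      ext; simp [Fin.val_rev]; omega
    have e2 : a.rev = (⟨(n-2-a.val)+1, by omega⟩ : Fin n) := by
      ext; simp [Fin.val_rev]; omega
    rw [e1, e2] at hlt
    convert hlt using 3
  · intro a ha
    simp only [mem_coe, mem_filter, mem_univ, true_and, Equiv.trans_apply, Fin.revPerm_apply] at ha ⊢
    obtain ⟨h, hlt⟩ := ha
    refine ⟨by omega, ?_⟩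
    have e1 : ((⟨n - 2 - a.val, by omega⟩ : Fin n)).rev
        = (⟨a.val + 1, h⟩ : Fin n) := by
      ext; simp [Fin.val_rev]; omega
    have e2 : ((⟨(n - 2 - a.val) + 1, by omega⟩ : Fin n)).rev = a := by
      ext; simp [Fin.val_rev]; omega
    rw [show (⟨(n - 2 - a.val) + 1, by omega⟩ : Fin n).rev = a from e2]
    rw [e1]
    exact hlt
  · intro a ha
    simp only [mem_coe, mem_filter, mem_univ, true_and] at ha
    obtain ⟨h, _⟩ := ha
    ext; simp; omega
  · intro a ha
    simp only [mem_coe, mem_filter, mem_univ, true_and] at ha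
    obtain ⟨h, _⟩ := ha
    ext; simp; omega

lemma rev_rev_perm {n : ℕ} (A : Equiv.Perm (Fin n)) :
    Fin.revPerm.trans (Fin.revPerm.trans A) = A := by
  ext i
  simp [Fin.rev_rev]

theorem papTotal_symm (n k : ℕ) (hn0 : 0 < n) (hk : k ≤ n - 1) :
    papTotal n k = papTotal n (n - k - 1) := by
  classical
  unfold papTotal
  apply Finset.card_nbij' (i := fun A => Fin.revPerm.trans A)
    (j := fun A => Fin.revPerm.trans A)
  · intro A hA
    simp only [mem_coe, mem_filter, mem_univ, true_and] at hA ⊢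
    obtain ⟨hp, hasc⟩ := hA
    refine ⟨isPAP_rev A hp, ?_⟩
    have h1 := ascents_add_descents A
    have h2 := ascents_rev A
    omega
  · intro B hB
    simp only [mem_coe, mem_filter, mem_univ, true_and] at hB ⊢
    obtain ⟨hp, hasc⟩ := hB
    refine ⟨isPAP_rev B hp, ?_⟩
    have h1 := ascents_add_descents B
    have h2 := ascents_rev B
    omega
  · intro A _; exact rev_rev_perm A
  · intro A _; exact rev_rev_perm A
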